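/- Let f : X → Y be a function between sets and φ : X → Σ. Define ∃_f φ : Y → Σ by (∃_f φ y)₁ = ⋃_{x ∈ f⁻¹(y)} !(φ x)₁ and (∃_f φ y)₀ = ↑_{!(∃_f φ y)₁} { ⟨n⟩ : there exists x ∈ f⁻¹(y) with n ∈ (φ x)₀ }. Then ∃_f φ y is an element of Σ for every y ∈ Y, and for every χ : Y → Σ one has ∃_f φ ≤ χ if and only if φ ≤ χ ∘ f. -/

import Mathlib

open CategoryTheory Encodable Denumerable

namespace Herbrand

/-- Kleene application in Kleene's first pca `K₁`: `e · n`. -/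
def kap (e n : ℕ) : Part ℕ := Nat.Partrec.Code.eval (ofNat Nat.Partrec.Code e) n

/-- `kapIn r n S` : `r · n` is defined and its value lies in `S`. -/
def kapIn (r n : ℕ) (S : Set ℕ) : Prop := ∃ v ∈ kap r n, v ∈ S

/-- The list coded by a natural number (canonical bijection `ℕ ≃ List ℕ`). -/
def toL (n : ℕ) : List ℕ := ofNat (List ℕ) n

/-- The code of a list of natural numbers. -/
def ofL (l : List ℕ) : ℕ := encode l

@[simp] lemma toL_ofL (l : List ℕ) : toL (ofL l) = l := ofNat_encode l

/-- `!A` : the set of codes of lists all of whose entries lie in `A`. -/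
def bang (A : Set ℕ) : Set ℕ := {n | ∀ x ∈ toL n, x ∈ A}

/-- `m ⪯ n` : every entry of the list coded by `m` is an entry of the list coded by `n`. -/
def sle (m n : ℕ) : Prop := ∀ x ∈ toL m, x ∈ toL n

lemma sle_refl (m : ℕ) : sle m m := fun _ hx => hx

lemma sle_trans {m n k : ℕ} (h1 : sle m n) (h2 : sle n k) : sle m k :=
  fun x hx => h2 x (h1 x hx)

/-- `S` is upward closed in `!A`. -/
def UpwardClosedIn (A S : Set ℕ) : Prop :=
  ∀ m ∈ S, ∀ n ∈ bang A, sle m n → n ∈ S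

/-- `↑_{!A} S` : the set of `n ∈ !A` with `m ⪯ n` for some `m ∈ S`. -/
def upClo (A S : Set ℕ) : Set ℕ := {n | n ∈ bang A ∧ ∃ m ∈ S, sle m n}

lemma mem_bang_univ (n : ℕ) : n ∈ bang Set.univ := fun x _ => Set.mem_univ x

/-- From a partial recursive function we get a `K₁`-code for it. -/
theorem exists_kap_eq {f : ℕ →. ℕ} (hf : Nat.Partrec f) : ∃ e, ∀ n, kap e n = f n := by
  obtain ⟨c, hc⟩ := Nat.Partrec.Code.exists_code.mp hf
  exact ⟨encode c, fun n => by simp [kap, hc]⟩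


/-- A pair of sets of numbers: candidate Herbrand truth value `(X₀, X₁)`. -/
structure HPair where
  act : Set ℕ
  pot : Set ℕ

/-- `X` is a Herbrand truth value (an element of `Σ`): `X₀ ⊆ !X₁` and
`X₀` is upward closed in `!X₁`. -/
def HPair.IsSigma (X : HPair) : Prop :=
  X.act ⊆ bang X.pot ∧ UpwardClosedIn X.pot X.act

/-- The preorder on `X → Σ` of the Herbrand tripos. -/
def hle {X : Type} (φ ψ : X → HPair) : Prop :=
  ∃ r : ℕ, ∀ x : X, ∀ n : ℕ,
    (n ∈ bang (φ x).pot → kapIn r n (bang (ψ x).pot)) ∧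
    (n ∈ (φ x).act → kapIn r n (ψ x).act)

/-- `A & B = {Nat.pair 0 a : a ∈ A} ∪ {Nat.pair 1 b : b ∈ B}`. -/
def amp (A B : Set ℕ) : Set ℕ :=
  (fun a => Nat.pair 0 a) '' A ∪ (fun b => Nat.pair 1 b) '' B

/-- `m_A`: the code of the list of all `a` with `Nat.pair 0 a` an entry of the list coded
by `m`. -/
def projL (m : ℕ) : ℕ :=
  ofL ((toL m).filterMap fun p => if p.unpair.1 = 0 then some p.unpair.2 else none)

/-- `m_B`: the code of the list of all `b` with `Nat.pair 1 b` an entry of the list coded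
by `m`. -/
def projR (m : ℕ) : ℕ :=
  ofL ((toL m).filterMap fun p => if p.unpair.1 = 1 then some p.unpair.2 else none)

/-- Conjunction of Herbrand truth values. -/
def conj (A B : HPair) : HPair where
  act := {m | m ∈ bang (amp A.pot B.pot) ∧ projL m ∈ A.act ∧ projR m ∈ B.act}
  pot := amp A.pot B.pot

/-- Disjunction of Herbrand truth values. -/
def disj (A B : HPair) : HPair where
  act := {m | m ∈ bang (amp A.pot B.pot) ∧ (projL m ∈ A.act ∨ projR m ∈ B.act)}
  pot := amp A.pot B.pot

/-- The potential realizers of an implication. -/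
def implPot (A B : HPair) : Set ℕ := {c | ∀ m ∈ bang A.pot, kapIn c m (bang B.pot)}

/-- Implication of Herbrand truth values. -/
def impl (A B : HPair) : HPair where
  act := upClo (implPot A B)
    {n | ∃ c, n = ofL [c] ∧ c ∈ implPot A B ∧ ∀ m ∈ A.act, kapIn c m B.act}
  pot := implPot A B

/-- The bottom Herbrand truth value `(∅, ∅)`. -/
def bot : HPair := ⟨∅, ∅⟩

/-- Negation of Herbrand truth values: `¬A = A → (∅, ∅)`. -/
def neg (A : HPair) : HPair := impl A bot


/-- The existential quantifier `∃_f φ` along `f : X → Y`. -/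
def hexists {X Y : Type} (f : X → Y) (φ : X → HPair) (y : Y) : HPair where
  act := upClo (⋃ x ∈ {x | f x = y}, bang (φ x).pot)
    {m | ∃ n, m = ofL [n] ∧ ∃ x, f x = y ∧ n ∈ (φ x).act}
  pot := ⋃ x ∈ {x | f x = y}, bang (φ x).pot


/-- `kap r` is a partial recursive function of the argument. -/
lemma kap_partrec (r : ℕ) : Partrec (kap r) :=
  Partrec.nat_iff.2 (Nat.Partrec.Code.exists_code.mpr ⟨_, rfl⟩)

/-- One step of the "apply `r` to every entry and concatenate" loop. -/
def kstep (r : ℕ) (p : List ℕ × List ℕ) : Part (List ℕ ⊕ (List ℕ × List ℕ)) :=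
  match p.1 with
  | [] => Part.some (Sum.inl p.2)
  | n :: t => (kap r n).map fun v => Sum.inr (t, p.2 ++ toL v)

set_option maxHeartbeats 1000000 in
lemma kstep_partrec (r : ℕ) : Partrec (kstep r) := by
  have h := Partrec.optionCasesOn_right
    (o := fun p : List ℕ × List ℕ => p.1.head?)
    (f := fun p : List ℕ × List ℕ => (Sum.inl p.2 : List ℕ ⊕ (List ℕ × List ℕ)))
    (g := fun (p : List ℕ × List ℕ) (n : ℕ) => (kap r n).map fun v =>
      (Sum.inr (p.1.tail, p.2 ++ toL v) : List ℕ ⊕ (List ℕ × List ℕ)))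
    (Primrec.list_head?.to_comp.comp Computable.fst)
    (Computable.sumInl.comp Computable.snd)
    (Partrec.to₂ (((kap_partrec r).comp Computable.snd).map
      (Computable.to₂ (Computable.sumInr.comp (Computable.pair
        (Primrec.list_tail.to_comp.comp (Computable.fst.comp (Computable.fst.comp Computable.fst)))
        (Computable.list_append.comp (Computable.snd.comp (Computable.fst.comp Computable.fst))
          ((Computable.ofNat (List ℕ)).comp Computable.snd)))))))
  exact h.of_eq fun p => by rcases p with ⟨(_ | ⟨n, t⟩), b⟩ <;> rfl

/-- Apply `r` to every entry of the list coded by `m` and concatenate the resulting lists. -/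
def kConcat (r : ℕ) (m : ℕ) : Part ℕ := (PFun.fix (kstep r) (toL m, [])).map ofL

lemma kConcat_partrec (r : ℕ) : Partrec (kConcat r) :=
  ((kstep_partrec r).fix.comp
    (Computable.pair (Computable.ofNat (List ℕ)) (Computable.const []))).map
    (Computable.to₂ (Computable.encode.comp Computable.snd))

lemma kstep_loop (r : ℕ) (P : Set ℕ) :
    ∀ l acc : List ℕ, (∀ n ∈ l, kapIn r n (bang P)) → (∀ x ∈ acc, x ∈ P) →
    ∃ w ∈ PFun.fix (kstep r) (l, acc), (∀ x ∈ w, x ∈ P) ∧ (∀ x ∈ acc, x ∈ w) ∧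
      ∀ n ∈ l, ∀ v ∈ kap r n, ∀ x ∈ toL v, x ∈ w := by
  intro l
  induction l with
  | nil =>
    intro acc _ hacc
    exact ⟨acc, PFun.fix_stop (Part.mem_some _), hacc, fun x h => h, by simp⟩
  | cons n t ih =>
    intro acc h hacc
    obtain ⟨v, hv, hvP⟩ := h n (List.mem_cons_self)
    have hstep : (Sum.inr (t, acc ++ toL v) : List ℕ ⊕ (List ℕ × List ℕ)) ∈
        kstep r (n :: t, acc) := Part.mem_map _ hv
    obtain ⟨w, hw, hwP, haccw, hlw⟩ := ih (acc ++ toL v)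
      (fun n' hn' => h n' (List.mem_cons_of_mem _ hn'))
      (fun x hx => by
        rcases List.mem_append.1 hx with h' | h'
        exacts [hacc x h', hvP x h'])
    refine ⟨w, ?_, hwP, fun x hx => haccw x (List.mem_append_left _ hx), ?_⟩
    · rwa [PFun.fix_fwd_eq hstep]
    · intro n' hn' v' hv' x hx
      rcases List.mem_cons.1 hn' with rfl | hn'
      · have : v' = v := Part.mem_unique hv' hv
        subst this
        exact haccw x (List.mem_append_right _ hx)
      · exact hlw n' hn' v' hv' x hx

/-- `∃_f φ y` lands in `Σ` and `∃_f` is left adjoint to reindexing. -/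
theorem hexists_isSigma_and_adjoint {X Y : Type} (f : X → Y) (φ : X → HPair)
    (hφ : ∀ x, (φ x).IsSigma) :
    (∀ y, (hexists f φ y).IsSigma) ∧
    ∀ χ : Y → HPair, (∀ y, (χ y).IsSigma) →
      (hle (hexists f φ) χ ↔ hle φ (χ ∘ f)) := by
  constructor
  · intro y
    constructor
    · exact fun m hm => hm.1
    · rintro m ⟨hmB, m0, hm0, hsle⟩ n hn hmn
      exact ⟨hn, m0, hm0, sle_trans hsle hmn⟩
  · intro χ hχ
    constructor
    · rintro ⟨r, hr⟩
      have hpr : Partrec fun n : ℕ => kap r (ofL [n]) :=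
        (kap_partrec r).comp (Computable.encode.comp
          (Computable.list_cons.comp Computable.id (Computable.const [])))
      obtain ⟨e, he⟩ := exists_kap_eq (Partrec.nat_iff.1 hpr)
      refine ⟨e, fun x n => ⟨?_, ?_⟩⟩
      · intro hn
        have h1 : ofL [n] ∈ bang (hexists f φ (f x)).pot := by
          intro z hz
          rw [toL_ofL] at hz
          simp only [List.mem_singleton] at hz
          subst hz
          simp only [hexists, Set.mem_iUnion]
          exact ⟨x, rfl, hn⟩
        obtain ⟨v, hv, hvm⟩ := (hr (f x) (ofL [n])).1 h1
        exact ⟨v, by rwa [he], hvm⟩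
      · intro hn
        have hb : ofL [n] ∈ bang (hexists f φ (f x)).pot := by
          intro z hz
          rw [toL_ofL] at hz
          simp only [List.mem_singleton] at hz
          subst hz
          simp only [hexists, Set.mem_iUnion]
          exact ⟨x, rfl, (hφ x).1 hn⟩
        have h1 : ofL [n] ∈ (hexists f φ (f x)).act :=
          ⟨hb, ofL [n], ⟨n, rfl, x, rfl, hn⟩, sle_refl _⟩
        obtain ⟨v, hv, hvm⟩ := (hr (f x) (ofL [n])).2 h1
        exact ⟨v, by rwa [he], hvm⟩
    · rintro ⟨r, hr⟩
      obtain ⟨e, he⟩ := exists_kap_eq (Partrec.nat_iff.1 (kConcat_partrec r))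
      have key : ∀ y m, m ∈ bang (hexists f φ y).pot →
          ∀ n ∈ toL m, kapIn r n (bang (χ y).pot) := by
        intro y m hm n hn
        have h2 := hm n hn
        simp only [hexists, Set.mem_iUnion] at h2
        obtain ⟨x, hx, hnx⟩ := h2
        subst hx
        exact (hr x n).1 hnx
      refine ⟨e, fun y m => ⟨?_, ?_⟩⟩
      · intro hm
        obtain ⟨w, hw, hwP, -, -⟩ := kstep_loop r (χ y).pot (toL m) [] (key y m hm) (by simp)
        refine ⟨ofL w, ?_, ?_⟩
        · rw [he]; exact Part.mem_map _ hw
        · intro z hz; rw [toL_ofL] at hz; exact hwP z hz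
      · rintro ⟨hmB, m0, ⟨n, rfl, x, hfx, hnact⟩, hsle⟩
        have hnm : n ∈ toL m := hsle n (by simp)
        obtain ⟨w, hw, hwP, -, hval⟩ :=
          kstep_loop r (χ y).pot (toL m) [] (key y m hmB) (by simp)
        obtain ⟨v, hv, hvact⟩ := (hr x n).2 hnact
        have hvact' : v ∈ (χ y).act := hfx ▸ hvact
        refine ⟨ofL w, by rw [he]; exact Part.mem_map _ hw, ?_⟩
        exact (hχ y).2 v hvact' (ofL w)
          (fun z hz => by rw [toL_ofL] at hz; exact hwP z hz)
          (fun z hz => by rw [toL_ofL]; exact hval n hnm v hv z hz)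


end Herbrand
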